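/- If every graded poset Q of rank n+1 that is r-thick (every nonempty open interval of Q has at least r elements) satisfies ∑_{S⊆[1,n]} a_S r^{n−|S|} f_S(Q) ≥ 0, then every graded poset P of rank n+1 satisfies ∑_{S⊆[1,n]} a_S f_S(P) ≥ 0. -/
import Mathlib


open scoped Classical

attribute [local instance] Fintype.ofFinite

/-- A rank function making a bounded poset graded of rank `n+1`. -/
def IsGraded (P : Type) [PartialOrder P] [BoundedOrder P] (ρ : P → ℕ) (n : ℕ) : Prop :=
  ρ ⊥ = 0 ∧ ρ ⊤ = n + 1 ∧ ∀ x y : P, x ⋖ y → ρ y = ρ x + 1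

/-- A poset is `r`-thick if every nonempty open interval has at least `r` elements. -/
def RThick (P : Type) [PartialOrder P] [Fintype P] (r : ℕ) : Prop :=
  ∀ x y : P, x < y → (∃ z, x < z ∧ z < y) →
    r ≤ (Finset.univ.filter fun z => x < z ∧ z < y).card

/-- The flag number `f_S(P)`: the number of chains of `P` whose set of ranks is `S`. -/
noncomputable def flagNum {P : Type} [PartialOrder P] [Fintype P] (ρ : P → ℕ)
    (S : Finset ℕ) : ℕ :=
  (Finset.univ.filter fun c : Finset P =>
    IsChain (· ≤ ·) (c : Set P) ∧ c.image ρ = S ∧ c.card = S.card).card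

/-- The flag number `f_S([x,y])` of the interval `[x,y]`, with ranks relative to `x`. -/
noncomputable def flagNumI {P : Type} [PartialOrder P] [Fintype P] (ρ : P → ℕ)
    (x y : P) (S : Finset ℕ) : ℕ :=
  (Finset.univ.filter fun c : Finset P =>
    IsChain (· ≤ ·) (c : Set P) ∧ (∀ z ∈ c, x < z ∧ z < y) ∧
      c.image (fun z => ρ z - ρ x) = S ∧ c.card = S.card).card

/-- The `k`-Möbius function `μ_k([x,y])`. -/
noncomputable def muk {P : Type} [PartialOrder P] [Fintype P] (k : ℝ) (x : P) (y : P) : ℝ :=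
  if x = y then 1
  else -1 - (1/k) * ∑ z ∈ (Finset.univ.filter fun z => x < z ∧ z < y).attach,
    muk k x z.val
termination_by (Finset.univ.filter fun w => w < y).card
decreasing_by
  have hz : (z : P) < y := (Finset.mem_filter.mp z.2).2.2
  apply Finset.card_lt_card
  rw [Finset.ssubset_iff_of_subset]
  · exact ⟨z, Finset.mem_filter.mpr ⟨Finset.mem_univ _, hz⟩,
      fun hc => absurd (Finset.mem_filter.mp hc).2 (lt_irrefl _)⟩
  · intro w hw
    exact Finset.mem_filter.mpr ⟨Finset.mem_univ _, (Finset.mem_filter.mp hw).2.trans hz⟩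

/-- The ordinary Möbius function of a finite poset. -/
noncomputable def mobius {P : Type} [PartialOrder P] [Fintype P] (x : P) (y : P) : ℤ :=
  if x = y then 1
  else -∑ z ∈ (Finset.univ.filter fun z => x ≤ z ∧ z < y).attach, mobius x z.val
termination_by (Finset.univ.filter fun w => w < y).card
decreasing_by
  have hz : (z : P) < y := (Finset.mem_filter.mp z.2).2.2
  apply Finset.card_lt_card
  rw [Finset.ssubset_iff_of_subset]
  · exact ⟨z, Finset.mem_filter.mpr ⟨Finset.mem_univ _, hz⟩,
      fun hc => absurd (Finset.mem_filter.mp hc).2 (lt_irrefl _)⟩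
  · intro w hw
    exact Finset.mem_filter.mpr ⟨Finset.mem_univ _, (Finset.mem_filter.mp hw).2.trans hz⟩

/-- A graded poset is `k`-Eulerian when `μ_k([x,y]) = (-1)^{ρ(y)-ρ(x)}` on every interval. -/
def IsKEulerian (P : Type) [PartialOrder P] [Fintype P] (ρ : P → ℕ) (k : ℝ) : Prop :=
  ∀ x y : P, x ≤ y → muk k x y = (-1 : ℝ) ^ (ρ y - ρ x)

/-- The flag `L^k` vector of a poset of rank `n+1`. -/
noncomputable def Lk {P : Type} [PartialOrder P] [Fintype P] (k : ℝ) (n : ℕ) (ρ : P → ℕ)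
    (S : Finset ℕ) : ℝ :=
  (-1 : ℝ) ^ (n - S.card) *
    ∑ T ∈ (Finset.Icc 1 n).powerset.filter (fun T => Finset.Icc 1 n \ S ⊆ T),
      (-(1/(2*k))) ^ T.card * (flagNum ρ T : ℝ)

/-- The flag `L^k` vector of an interval `[x,y]` of rank `n+1`. -/
noncomputable def LkI {P : Type} [PartialOrder P] [Fintype P] (k : ℝ) (n : ℕ) (ρ : P → ℕ)
    (x y : P) (S : Finset ℕ) : ℝ :=
  (-1 : ℝ) ^ (n - S.card) *
    ∑ T ∈ (Finset.Icc 1 n).powerset.filter (fun T => Finset.Icc 1 n \ S ⊆ T),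
      (-(1/(2*k))) ^ T.card * (flagNumI ρ x y T : ℝ)

/-- A set is even if it is a disjoint union of intervals of even cardinality. -/
def IsEvenSet (S : Finset ℕ) : Prop :=
  ∃ J : Finset (ℕ × ℕ),
    S = J.biUnion (fun p => Finset.Icc p.1 p.2) ∧
    (∀ p ∈ J, p.1 ≤ p.2 ∧ Even (p.2 + 1 - p.1)) ∧
    (∀ p ∈ J, ∀ q ∈ J, p ≠ q → Disjoint (Finset.Icc p.1 p.2) (Finset.Icc q.1 q.2))

/-- The horizontal `r`-fold duplication `D^r P`. -/
inductive Dup (P : Type) [PartialOrder P] [BoundedOrder P] (r : ℕ) : Type where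
  | bot : Dup P r
  | top : Dup P r
  | mid : {x : P // x ≠ ⊥ ∧ x ≠ ⊤} → Fin r → Dup P r

namespace Dup

variable {P : Type} [PartialOrder P] [BoundedOrder P] {r : ℕ}

def le : Dup P r → Dup P r → Prop
  | .bot, _ => True
  | .mid _ _, .bot => False
  | .mid x i, .mid y j => (x = y ∧ i = j) ∨ (x : P) < (y : P)
  | .mid _ _, .top => True
  | .top, .top => True
  | .top, _ => False

instance : PartialOrder (Dup P r) where
  le := Dup.le
  le_refl a := by cases a with
    | bot => trivial
    | top => trivial
    | mid x i => exact Or.inl ⟨rfl, rfl⟩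
  le_trans a b c hab hbc := by
    cases a with
    | bot => trivial
    | top =>
      cases b with
      | top =>
        cases c with
        | top => trivial
        | bot => exact hbc.elim
        | mid _ _ => exact hbc.elim
      | bot => exact hab.elim
      | mid _ _ => exact hab.elim
    | mid x i =>
      cases b with
      | bot => exact hab.elim
      | top =>
        cases c with
        | top => trivial
        | bot => exact hbc.elim
        | mid _ _ => exact hbc.elim
      | mid y j =>
        cases c with
        | bot => exact hbc.elim
        | top => trivial
        | mid z l =>
          rcases hab with ⟨rfl, rfl⟩ | h1
          · exact hbc
          · rcases hbc with ⟨rfl, rfl⟩ | h2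
            · exact Or.inr h1
            · exact Or.inr (h1.trans h2)
  le_antisymm a b hab hba := by
    cases a with
    | bot =>
      cases b with
      | bot => rfl
      | top => exact hba.elim
      | mid _ _ => exact hba.elim
    | top =>
      cases b with
      | top => rfl
      | bot => exact hab.elim
      | mid _ _ => exact hab.elim
    | mid x i =>
      cases b with
      | bot => exact hab.elim
      | top => exact hba.elim
      | mid y j =>
        rcases hab with ⟨rfl, rfl⟩ | h1
        · rfl
        · rcases hba with ⟨rfl, rfl⟩ | h2
          · exact absurd h1 (lt_irrefl _)
          · exact absurd (h1.trans h2) (lt_irrefl _)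

instance : BoundedOrder (Dup P r) where
  top := .top
  bot := .bot
  le_top a := by cases a <;> trivial
  bot_le a := trivial

instance [Finite P] : Finite (Dup P r) :=
  Finite.of_injective
    (fun a : Dup P r =>
      (match a with
        | .bot => none
        | .top => some none
        | .mid x i => some (some (x, i)) :
        Option (Option ({x : P // x ≠ ⊥ ∧ x ≠ ⊤} × Fin r))))
    (by intro a b h; cases a <;> cases b <;> simp_all)

/-- The rank function of `D^r P`, where `P` has rank `n+1`. -/
def rank (ρ : P → ℕ) (n : ℕ) : Dup P r → ℕ
  | .bot => 0
  | .top => n + 1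
  | .mid x _ => ρ x.val

/-- `a ∈ D^r P` is a copy of `x ∈ P`. -/
def IsCopy (a : Dup P r) (x : P) : Prop :=
  (x = ⊥ ∧ a = .bot) ∨ (x = ⊤ ∧ a = .top) ∨ ∃ h i, a = .mid ⟨x, h⟩ i

end Dup
section Aux

namespace Dup

variable {P : Type} [PartialOrder P] [BoundedOrder P] {r : ℕ}

lemma mid_le_mid {x y : {x : P // x ≠ ⊥ ∧ x ≠ ⊤}} {i j : Fin r} :
    (mid x i : Dup P r) ≤ mid y j ↔ (x = y ∧ i = j) ∨ (x : P) < (y : P) := Iff.rfl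

lemma mid_lt_mid {x y : {x : P // x ≠ ⊥ ∧ x ≠ ⊤}} {i j : Fin r} :
    (mid x i : Dup P r) < mid y j ↔ (x : P) < (y : P) := by
  constructor
  · rintro ⟨h1, h2⟩
    rcases h1 with ⟨rfl, rfl⟩ | h
    · exact absurd (le_refl (mid x i : Dup P r)) h2
    · exact h
  · intro h
    refine ⟨Or.inr h, fun hle => ?_⟩
    rcases hle with ⟨rfl, rfl⟩ | h2
    · exact lt_irrefl _ h
    · exact lt_irrefl _ (h.trans h2)

lemma le_bot_iff' {a : Dup P r} : a ≤ (bot : Dup P r) → a = bot := by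
  cases a <;> intro h <;> first | rfl | exact h.elim

lemma top_le_iff' {a : Dup P r} : (top : Dup P r) ≤ a → a = top := by
  cases a <;> intro h <;> first | rfl | exact h.elim

lemma bot_le'' (a : Dup P r) : (bot : Dup P r) ≤ a := trivial

lemma le_top'' (a : Dup P r) : a ≤ (top : Dup P r) := by cases a <;> trivial

lemma not_lt_bot {a : Dup P r} : ¬ a < (bot : Dup P r) := fun h => h.ne (le_bot_iff' h.le)

lemma not_top_lt {a : Dup P r} : ¬ (top : Dup P r) < a := fun h => h.ne' (top_le_iff' h.le)

lemma bot_lt_mid {x : {x : P // x ≠ ⊥ ∧ x ≠ ⊤}} {i : Fin r} : (bot : Dup P r) < mid x i :=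
  lt_of_le_of_ne trivial (fun h => by cases h)

lemma mid_lt_top {x : {x : P // x ≠ ⊥ ∧ x ≠ ⊤}} {i : Fin r} : (mid x i : Dup P r) < top :=
  lt_of_le_of_ne trivial (fun h => by cases h)

lemma bot_lt_top' (hne : (⊥ : P) ≠ ⊤) : (bot : Dup P r) < top :=
  lt_of_le_of_ne trivial (fun h => by cases h)

/-- underlying element -/
def unmid : Dup P r → P
  | .bot => ⊥
  | .top => ⊤
  | .mid x _ => x.val

/-- copy index -/
def idx (hr : 0 < r) : Dup P r → Fin r
  | .mid _ i => i
  | _ => ⟨0, hr⟩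

/-- lift an element of `P` to a copy in `Dup P r` -/
noncomputable def lift (x : P) (i : Fin r) : Dup P r :=
  if h : x ≠ ⊥ ∧ x ≠ ⊤ then .mid ⟨x, h⟩ i else .bot

lemma lift_eq_mid {x : P} (h : x ≠ ⊥ ∧ x ≠ ⊤) (i : Fin r) : lift x i = .mid ⟨x, h⟩ i :=
  dif_pos h

lemma unmid_lift {x : P} (h : x ≠ ⊥ ∧ x ≠ ⊤) (i : Fin r) : unmid (lift x i) = x := by
  rw [lift_eq_mid h]; rfl

lemma unmid_mono {a b : Dup P r} (hab : a ≤ b) : unmid a ≤ unmid b := by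
  cases a with
  | bot => exact bot_le
  | top => rw [top_le_iff' hab]
  | mid x i =>
    cases b with
    | bot => exact hab.elim
    | top => exact le_top
    | mid y j =>
      rcases hab with ⟨rfl, rfl⟩ | h
      · exact le_rfl
      · exact h.le

lemma rank_unmid {ρ : P → ℕ} {nn : ℕ} (h0 : ρ ⊥ = 0) (h1 : ρ ⊤ = nn + 1)
    (a : Dup P r) : rank ρ nn a = ρ (unmid a) := by
  cases a with
  | bot => exact h0.symm
  | top => exact h1.symm
  | mid x i => rfl

/-- Elements strictly between two elements of `Dup P r` are `mid`, and copies move freely. -/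
lemma between_mid {a b z : Dup P r} (h1 : a < z) (h2 : z < b) :
    ∃ x i, z = mid x i ∧ ∀ j : Fin r, a < mid x j ∧ mid x j < b := by
  cases z with
  | bot => exact absurd h1 not_lt_bot
  | top => exact absurd h2 not_top_lt
  | mid x i =>
    refine ⟨x, i, rfl, fun j => ⟨?_, ?_⟩⟩
    · cases a with
      | bot => exact bot_lt_mid
      | top => exact absurd h1 not_top_lt
      | mid y k => exact mid_lt_mid.2 (mid_lt_mid.1 h1)
    · cases b with
      | bot => exact absurd h2 not_lt_bot
      | top => exact mid_lt_top
      | mid y k => exact mid_lt_mid.2 (mid_lt_mid.1 h2)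

end Dup

section Main

variable {P : Type} [PartialOrder P] [BoundedOrder P] [Finite P] {r n : ℕ} {ρ : P → ℕ}

open Dup in
lemma dup_graded (hr : 0 < r) (hP : IsGraded P ρ n) :
    IsGraded (Dup P r) (Dup.rank ρ n) n := by
  obtain ⟨h0, h1, hcov⟩ := hP
  refine ⟨rfl, rfl, ?_⟩
  intro x y hxy
  obtain ⟨hlt, hnb⟩ := hxy
  cases x with
  | top => exact absurd hlt Dup.not_top_lt
  | bot =>
    cases y with
    | bot => exact absurd hlt (lt_irrefl _)
    | top =>
      -- ⊥ ⋖ ⊤ in P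
      have hbt : (⊥ : P) < ⊤ := lt_of_le_of_ne bot_le (fun hh => by
        rw [← hh, h0] at h1; exact Nat.succ_ne_zero n h1.symm)
      have : ρ (⊤ : P) = ρ (⊥ : P) + 1 := by
        refine hcov ⊥ ⊤ ⟨hbt, fun w hw1 hw2 => ?_⟩
        have hw : w ≠ ⊥ ∧ w ≠ ⊤ := ⟨hw1.ne', hw2.ne⟩
        exact hnb (c := .mid ⟨w, hw⟩ ⟨0, hr⟩) bot_lt_mid mid_lt_top
      rw [h0, h1] at this
      show n + 1 = 0 + 1
      omega
    | mid y j =>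
      have hby : (⊥ : P) < y := lt_of_le_of_ne bot_le (Ne.symm y.2.1)
      have : ρ (y : P) = ρ (⊥ : P) + 1 := by
        refine hcov ⊥ y ⟨hby, fun w hw1 hw2 => ?_⟩
        have hw : w ≠ ⊥ ∧ w ≠ ⊤ := ⟨hw1.ne', fun hh => y.2.2 (top_le_iff.1 (hh ▸ hw2).le)⟩
        exact hnb (c := .mid ⟨w, hw⟩ ⟨0, hr⟩) bot_lt_mid (mid_lt_mid (x := ⟨w, hw⟩) (y := y).2 hw2)
      show ρ (y : P) = 0 + 1
      rw [this, h0]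
  | mid x i =>
    cases y with
    | bot => exact absurd hlt Dup.not_lt_bot
    | top =>
      have hxt : (x : P) < ⊤ := lt_of_le_of_ne le_top x.2.2
      have : ρ (⊤ : P) = ρ (x : P) + 1 := by
        refine hcov x ⊤ ⟨hxt, fun w hw1 hw2 => ?_⟩
        have hw : w ≠ ⊥ ∧ w ≠ ⊤ := ⟨fun hh => x.2.1 (le_bot_iff.1 (hh ▸ hw1).le), hw2.ne⟩
        exact hnb (c := .mid ⟨w, hw⟩ ⟨0, hr⟩) (mid_lt_mid (x := x) (y := ⟨w, hw⟩).2 hw1) mid_lt_top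
      show n + 1 = ρ (x : P) + 1
      rw [← h1, this]
    | mid y j =>
      have hxy : (x : P) < (y : P) := mid_lt_mid.1 hlt
      have : ρ (y : P) = ρ (x : P) + 1 := by
        refine hcov x y ⟨hxy, fun w hw1 hw2 => ?_⟩
        have hw : w ≠ ⊥ ∧ w ≠ ⊤ :=
          ⟨fun hh => x.2.1 (le_bot_iff.1 (hh ▸ hw1).le),
           fun hh => y.2.2 (top_le_iff.1 (hh ▸ hw2).le)⟩
        exact hnb (c := .mid ⟨w, hw⟩ ⟨0, hr⟩) (mid_lt_mid (x := x) (y := ⟨w, hw⟩).2 hw1) (mid_lt_mid (x := ⟨w, hw⟩) (y := y).2 hw2)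
      exact this

open Dup in
lemma dup_thick (hr : 1 ≤ r) : RThick (Dup P r) r := by
  intro x y hxy ⟨z, hz1, hz2⟩
  obtain ⟨w, i, rfl, hall⟩ := between_mid hz1 hz2
  calc r = (Finset.univ : Finset (Fin r)).card := by simp
    _ ≤ _ := by
        refine Finset.card_le_card_of_injOn (fun j => Dup.mid w j) ?_ ?_
        · intro j _
          exact Finset.mem_filter.2 ⟨Finset.mem_univ _, hall j⟩
        · intro j _ k _ hjk
          cases hjk; rfl

end Main

end Aux
section Count

variable {P : Type} [PartialOrder P] [BoundedOrder P] [Finite P] {r n : ℕ} {ρ : P → ℕ}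

open Dup

/-- choose the element of a chain with a given rank -/
noncomputable def pick (ρ : P → ℕ) (n : ℕ) (c : Finset (Dup P r)) (s : ℕ) : Dup P r :=
  if h : ∃ z ∈ c, Dup.rank ρ n z = s then h.choose else .bot

omit [Finite P] in
lemma pick_spec {c : Finset (Dup P r)} {s : ℕ} (h : ∃ z ∈ c, Dup.rank ρ n z = s) :
    pick ρ n c s ∈ c ∧ Dup.rank ρ n (pick ρ n c s) = s := by
  rw [pick, dif_pos h]
  exact h.choose_spec

lemma flagNum_dup (hr : 0 < r) (h0 : ρ ⊥ = 0) (h1 : ρ ⊤ = n + 1) {S : Finset ℕ}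
    (hS : S ⊆ Finset.Icc 1 n) :
    flagNum (Dup.rank ρ n : Dup P r → ℕ) S = r ^ S.card * flagNum ρ S := by
  classical
  set A : Finset (Finset (Dup P r)) := Finset.univ.filter fun c =>
    IsChain (· ≤ ·) (c : Set (Dup P r)) ∧ c.image (Dup.rank ρ n) = S ∧ c.card = S.card with hA
  set D : Finset (Finset P) := Finset.univ.filter fun c =>
    IsChain (· ≤ ·) (c : Set P) ∧ c.image ρ = S ∧ c.card = S.card with hD
  set B : Finset (Finset P × (∀ s ∈ S, Fin r)) := D ×ˢ (S.pi fun _ => Finset.univ) with hB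
  have hBcard : B.card = r ^ S.card * D.card := by
    rw [hB, Finset.card_product, Finset.card_pi]
    simp [Finset.prod_const, mul_comm]
  have hrank_ne0 : ∀ s ∈ S, s ≠ 0 ∧ s ≠ n + 1 := by
    intro s hs
    have := Finset.mem_Icc.1 (hS hs)
    omega
  have hru : ∀ z : Dup P r, Dup.rank ρ n z = ρ (Dup.unmid z) := rank_unmid h0 h1
  -- facts about members of A
  have hmidA : ∀ c ∈ A, ∀ z ∈ c, ∃ x i, z = Dup.mid x i := by
    intro c hc z hz
    obtain ⟨-, hch, him, hcard⟩ := Finset.mem_filter.1 hc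
    have hzS : Dup.rank ρ n z ∈ S := him ▸ Finset.mem_image_of_mem _ hz
    obtain ⟨hne0, hnen⟩ := hrank_ne0 _ hzS
    cases z with
    | bot => exact absurd rfl hne0
    | top => exact absurd rfl hnen
    | mid x i => exact ⟨x, i, rfl⟩
  have hinjA : ∀ c ∈ A, Set.InjOn (Dup.rank ρ n) (c : Set (Dup P r)) := by
    intro c hc
    obtain ⟨-, hch, him, hcard⟩ := Finset.mem_filter.1 hc
    exact Finset.card_image_iff.1 (by rw [him, hcard])
  -- facts about members of D
  have hmemD : ∀ d ∈ D, ∀ x ∈ d, (x ≠ ⊥ ∧ x ≠ ⊤) ∧ ρ x ∈ S := by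
    intro d hd x hx
    obtain ⟨-, hch, him, hcard⟩ := Finset.mem_filter.1 hd
    have hxS : ρ x ∈ S := him ▸ Finset.mem_image_of_mem _ hx
    have hb := Finset.mem_Icc.1 (hS hxS)
    refine ⟨⟨fun hh => ?_, fun hh => ?_⟩, hxS⟩
    · rw [hh, h0] at hb; omega
    · rw [hh, h1] at hb; omega
  have key : A.card = B.card := by
    refine Finset.card_bij'
      (fun c _ => (c.image Dup.unmid, fun s _ => Dup.idx hr (pick ρ n c s)))
      (fun p _ => p.1.image fun x =>
        Dup.lift x (if hx : ρ x ∈ S then p.2 (ρ x) hx else ⟨0, hr⟩)) ?_ ?_ ?_ ?_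
    · -- forward map lands in B
      rintro c hc
      obtain ⟨-, hch, him, hcard⟩ := Finset.mem_filter.1 hc
      have himu : (c.image Dup.unmid).image ρ = S := by
        rw [Finset.image_image]
        refine Eq.trans (Finset.image_congr fun z _ => ?_) him
        exact (hru z).symm
      have huinj : Set.InjOn Dup.unmid (c : Set (Dup P r)) := by
        intro z hz w hw hzw
        exact hinjA c hc hz hw (by rw [hru, hru, hzw])
      refine Finset.mem_product.2 ⟨Finset.mem_filter.2 ⟨Finset.mem_univ _, ?_, himu, ?_⟩, ?_⟩
      · -- chain
        rintro x hx y hy hxy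
        obtain ⟨z, hz, rfl⟩ := Finset.mem_image.1 (by exact_mod_cast hx)
        obtain ⟨w, hw, rfl⟩ := Finset.mem_image.1 (by exact_mod_cast hy)
        have hzw : z ≠ w := fun hh => hxy (by rw [hh])
        rcases hch hz hw hzw with h' | h'
        · exact Or.inl (unmid_mono h')
        · exact Or.inr (unmid_mono h')
      · rw [Finset.card_image_of_injOn huinj, hcard]
      · exact Finset.mem_pi.2 fun s hs => Finset.mem_univ _
    · -- backward map lands in A
      rintro ⟨d, g⟩ hp
      obtain ⟨hd, -⟩ := Finset.mem_product.1 hp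
      obtain ⟨-, hch, him, hcard⟩ := Finset.mem_filter.1 hd
      have hmem := hmemD d hd
      show d.image (fun x => Dup.lift x (if hx : ρ x ∈ S then g (ρ x) hx else ⟨0, hr⟩)) ∈ A
      have hFx : ∀ x (hx : x ∈ d),
          Dup.lift x (if hx' : ρ x ∈ S then g (ρ x) hx' else ⟨0, hr⟩)
            = Dup.mid ⟨x, (hmem x hx).1⟩ (g (ρ x) (hmem x hx).2) := by
        intro x hx
        rw [dif_pos (hmem x hx).2]
        exact lift_eq_mid (hmem x hx).1 _
      have hFinj : Set.InjOn
          (fun x => Dup.lift x (if hx : ρ x ∈ S then g (ρ x) hx else ⟨0, hr⟩))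
          (d : Set P) := by
        intro x hx y hy hxy
        have h2 : Dup.lift x (if hx' : ρ x ∈ S then g (ρ x) hx' else ⟨0, hr⟩)
            = Dup.lift y (if hy' : ρ y ∈ S then g (ρ y) hy' else ⟨0, hr⟩) := hxy
        have h3 := congrArg Dup.unmid h2
        rw [hFx x hx, hFx y hy] at h3
        exact h3
      refine Finset.mem_filter.2 ⟨Finset.mem_univ _, ?_, ?_, ?_⟩
      · rintro z hz w hw hzw
        obtain ⟨x, hx, rfl⟩ := Finset.mem_image.1 (by exact_mod_cast hz)
        obtain ⟨y, hy, rfl⟩ := Finset.mem_image.1 (by exact_mod_cast hw)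
        have hxy : x ≠ y := fun hh => hzw (by rw [hh])
        rcases hch hx hy hxy with h' | h'
        · refine Or.inl ?_
          show Dup.lift x _ ≤ Dup.lift y _
          rw [hFx x hx, hFx y hy]
          exact (mid_lt_mid (x := ⟨x, (hmem x hx).1⟩) (y := ⟨y, (hmem y hy).1⟩).2
            (lt_of_le_of_ne h' hxy)).le
        · refine Or.inr ?_
          show Dup.lift y _ ≤ Dup.lift x _
          rw [hFx x hx, hFx y hy]
          exact (mid_lt_mid (x := ⟨y, (hmem y hy).1⟩) (y := ⟨x, (hmem x hx).1⟩).2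
            (lt_of_le_of_ne h' hxy.symm)).le
      · rw [Finset.image_image]
        refine Eq.trans (Finset.image_congr fun x hx => ?_) him
        show Dup.rank ρ n (Dup.lift x _) = ρ x
        rw [hFx x hx]
        rfl
      · rw [Finset.card_image_of_injOn hFinj, hcard]
    · -- left inverse
      intro c hc
      obtain ⟨-, hch, him, hcard⟩ := Finset.mem_filter.1 hc
      show (c.image Dup.unmid).image
        (fun x => Dup.lift x (if hx : ρ x ∈ S then Dup.idx hr (pick ρ n c (ρ x)) else ⟨0, hr⟩))
        = c
      rw [Finset.image_image]
      refine Eq.trans (Finset.image_congr ?_) Finset.image_id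
      intro z hz
      obtain ⟨x, i, rfl⟩ := hmidA c hc z hz
      have hzS : Dup.rank ρ n (Dup.mid x i) ∈ S := him ▸ Finset.mem_image_of_mem _ hz
      show Dup.lift (x : P) (if hx : ρ (x : P) ∈ S then Dup.idx hr (pick ρ n c (ρ (x : P)))
        else ⟨0, hr⟩) = Dup.mid x i
      rw [dif_pos (show ρ (x : P) ∈ S from hzS)]
      have hex : ∃ w ∈ c, Dup.rank ρ n w = ρ (x : P) := ⟨_, hz, rfl⟩
      obtain ⟨hpm, hpr⟩ := pick_spec hex
      have hpe : pick ρ n c (ρ (x : P)) = Dup.mid x i := hinjA c hc hpm hz hpr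
      rw [hpe, lift_eq_mid x.2]
      rfl
    · -- right inverse
      rintro ⟨d, g⟩ hp
      obtain ⟨hd, -⟩ := Finset.mem_product.1 hp
      obtain ⟨-, hch, him, hcard⟩ := Finset.mem_filter.1 hd
      have hmem := hmemD d hd
      have hFx : ∀ x (hx : x ∈ d),
          Dup.lift x (if hx' : ρ x ∈ S then g (ρ x) hx' else ⟨0, hr⟩)
            = Dup.mid ⟨x, (hmem x hx).1⟩ (g (ρ x) (hmem x hx).2) := by
        intro x hx
        rw [dif_pos (hmem x hx).2]
        exact lift_eq_mid (hmem x hx).1 _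
      show ((d.image fun x => Dup.lift x (if hx : ρ x ∈ S then g (ρ x) hx else ⟨0, hr⟩)).image
          Dup.unmid,
        fun s _ => Dup.idx hr (pick ρ n
          (d.image fun x => Dup.lift x (if hx : ρ x ∈ S then g (ρ x) hx else ⟨0, hr⟩)) s))
        = (d, g)
      refine Prod.ext ?_ ?_
      · show (d.image _).image Dup.unmid = d
        rw [Finset.image_image]
        refine Eq.trans (Finset.image_congr ?_) Finset.image_id
        intro x hx
        show Dup.unmid (Dup.lift x _) = x
        rw [hFx x hx]
        rfl
      · show (fun s _ => Dup.idx hr (pick ρ n _ s)) = g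
        funext s hs
        obtain ⟨x, hx, hρx⟩ := Finset.mem_image.1 (him ▸ hs : s ∈ d.image ρ)
        have hex : ∃ w ∈ d.image fun x =>
            Dup.lift x (if hx : ρ x ∈ S then g (ρ x) hx else ⟨0, hr⟩),
            Dup.rank ρ n w = s := by
          refine ⟨_, Finset.mem_image_of_mem _ hx, ?_⟩
          rw [hFx x hx, ← hρx]
          rfl
        obtain ⟨hpm, hpr⟩ := pick_spec hex
        obtain ⟨y, hy, hFy⟩ := Finset.mem_image.1 hpm
        have hρy : ρ y = s := by rw [← hpr, ← hFy, hFx y hy]; rfl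
        rw [← hFy, hFx y hy]
        show g (ρ y) (hmem y hy).2 = g s hs
        subst hρy
        rfl
  show A.card = r ^ S.card * D.card
  rw [key, hBcard]

end Count

/-- positivity on all `r`-thick posets implies positivity on all graded posets. -/
theorem flag_ineq_of_thick_ineq (n r : ℕ) (hr : 1 ≤ r) (a : Finset ℕ → ℝ)
    (h : ∀ (Q : Type) [PartialOrder Q] [BoundedOrder Q] [Finite Q] (ρQ : Q → ℕ),
      IsGraded Q ρQ n → RThick Q r →
      0 ≤ ∑ S ∈ (Finset.Icc 1 n).powerset,
            a S * (r : ℝ) ^ (n - S.card) * (flagNum ρQ S : ℝ))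
    (P : Type) [PartialOrder P] [BoundedOrder P] [Finite P] (ρ : P → ℕ)
    (hP : IsGraded P ρ n) :
    0 ≤ ∑ S ∈ (Finset.Icc 1 n).powerset, a S * (flagNum ρ S : ℝ) := by
  have hr' : 0 < r := hr
  have hQ := h (Dup P r) (Dup.rank ρ n) (dup_graded hr' hP) (dup_thick hr)
  have hsum : ∑ S ∈ (Finset.Icc 1 n).powerset,
      a S * (r : ℝ) ^ (n - S.card) * (flagNum (Dup.rank ρ n : Dup P r → ℕ) S : ℝ)
      = (r : ℝ) ^ n * ∑ S ∈ (Finset.Icc 1 n).powerset, a S * (flagNum ρ S : ℝ) := by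
    rw [Finset.mul_sum]
    refine Finset.sum_congr rfl fun S hS => ?_
    have hsub := Finset.mem_powerset.1 hS
    have hle : S.card ≤ n := le_trans (Finset.card_le_card hsub) (by simp [Nat.card_Icc])
    rw [flagNum_dup hr' hP.1 hP.2.1 hsub]
    have hpow : (r : ℝ) ^ (n - S.card) * (r : ℝ) ^ S.card = (r : ℝ) ^ n := by
      rw [← pow_add]
      congr 1
      omega
    push_cast
    calc a S * (r : ℝ) ^ (n - S.card) * ((r : ℝ) ^ S.card * (flagNum ρ S : ℝ))
        = ((r : ℝ) ^ (n - S.card) * (r : ℝ) ^ S.card) * (a S * (flagNum ρ S : ℝ)) := by ring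
      _ = (r : ℝ) ^ n * (a S * (flagNum ρ S : ℝ)) := by rw [hpow]
  rw [hsum] at hQ
  have hpos : (0 : ℝ) < (r : ℝ) ^ n := by
    have : (0 : ℝ) < (r : ℝ) := by exact_mod_cast hr'
    positivity
  exact (mul_nonneg_iff_of_pos_left hpos).mp hQ
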